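/- Let G = (A, B, E) be a bipartite graph with |A| ≥ 2 such that every vertex in B has at least one neighbor in A. Then there exist subsets X ⊆ A and B' ⊆ B with |B'| ≥ |B| / (150 · ln |A|) such that every vertex b ∈ B' has exactly one neighbor in X. -/

import Mathlib

open Finset

lemma weight_sum {α : Type} [DecidableEq α] (s : Finset α) (p q : ℝ) :
    ∑ X ∈ s.powerset, p ^ X.card * q ^ (s.card - X.card) = (p + q) ^ s.card := by
  rw [← Finset.prod_const, Finset.prod_add]
  refine Finset.sum_congr rfl fun t ht => ?_
  rw [Finset.mem_powerset] at ht
  rw [Finset.prod_const, Finset.prod_const, Finset.card_sdiff, Finset.inter_eq_left.2 ht]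

lemma iso_sum {α : Type} [DecidableEq α] [Fintype α] (N : Finset α) (p q : ℝ) :
    ∑ X ∈ (Finset.univ : Finset α).powerset,
      (if (X ∩ N).card = 1 then p ^ X.card * q ^ (Fintype.card α - X.card) else 0)
    = N.card * (p * q ^ (N.card - 1)) * (p + q) ^ (Fintype.card α - N.card) := by
  classical
  set n := Fintype.card α with hn
  have key : ∑ X ∈ (Finset.univ : Finset α).powerset,
      (if (X ∩ N).card = 1 then p ^ X.card * q ^ (n - X.card) else 0)
      = ∑ YZ ∈ N.powerset ×ˢ Nᶜ.powerset,
        (if (YZ.1).card = 1 then p ^ (YZ.1.card + YZ.2.card) * q ^ (n - (YZ.1.card + YZ.2.card)) else 0) := by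
    refine Finset.sum_nbij' (fun X => (X ∩ N, X \ N)) (fun YZ => YZ.1 ∪ YZ.2) ?_ ?_ ?_ ?_ ?_
    · intro X _
      simp only [Finset.mem_product, Finset.mem_powerset]
      exact ⟨Finset.inter_subset_right, fun a ha => by
        simp only [Finset.mem_sdiff] at ha; simpa using ha.2⟩
    · intro YZ _; simp [Finset.mem_powerset]
    · intro X _
      ext a; by_cases h : a ∈ N <;> simp [h]
    · intro YZ hYZ
      simp only [Finset.mem_product, Finset.mem_powerset] at hYZ
      obtain ⟨hY, hZ⟩ := hYZ
      have h1 : (YZ.1 ∪ YZ.2) ∩ N = YZ.1 := by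
        ext a
        simp only [Finset.mem_inter, Finset.mem_union]
        constructor
        · rintro ⟨h | h, hN⟩
          · exact h
          · exact absurd hN (by simpa using hZ h)
        · intro h; exact ⟨Or.inl h, hY h⟩
      have h2 : (YZ.1 ∪ YZ.2) \ N = YZ.2 := by
        ext a
        simp only [Finset.mem_sdiff, Finset.mem_union]
        constructor
        · rintro ⟨h | h, hN⟩
          · exact absurd (hY h) hN
          · exact h
        · intro h; exact ⟨Or.inr h, by simpa using hZ h⟩
      exact Prod.ext h1 h2
    · intro X _
      have hdisj : Disjoint (X ∩ N) (X \ N) := by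
        exact Finset.disjoint_left.2 fun a ha hb => (Finset.mem_sdiff.1 hb).2 (Finset.mem_inter.1 ha).2
      have hcard : (X ∩ N).card + (X \ N).card = X.card := by
        rw [← Finset.card_union_of_disjoint hdisj]
        congr 1
        ext a; by_cases h : a ∈ N <;> simp [h]
      rw [hcard]
  rw [key, Finset.sum_product]
  have step : ∀ Y ∈ N.powerset,
      ∑ Z ∈ Nᶜ.powerset, (if Y.card = 1 then p ^ (Y.card + Z.card) * q ^ (n - (Y.card + Z.card)) else 0)
      = (if Y.card = 1 then p * q ^ (N.card - 1) else 0) * (p + q) ^ (n - N.card) := by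
    intro Y hY
    by_cases h : Y.card = 1
    · simp only [h, if_true]
      have : ∀ Z ∈ Nᶜ.powerset,
          p ^ (1 + Z.card) * q ^ (n - (1 + Z.card))
          = (p * q ^ (N.card - 1)) * (p ^ Z.card * q ^ (Nᶜ.card - Z.card)) := by
        intro Z hZ
        rw [Finset.mem_powerset] at hZ
        have hZc : Z.card ≤ Nᶜ.card := Finset.card_le_card hZ
        have hNc : Nᶜ.card = n - N.card := by
          rw [Finset.card_compl]
        have hNn : N.card ≤ n := Finset.card_le_card (Finset.subset_univ N) |>.trans_eq (by simp [hn])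
        have hN1 : 1 ≤ N.card := by
          by_contra hc
          push_neg at hc
          interval_cases h' : N.card
          · simp [Finset.card_eq_zero] at h'
            subst h'
            simp at hY
            subst hY
            simp at h
        have e1 : n - (1 + Z.card) = (N.card - 1) + (Nᶜ.card - Z.card) := by
          rw [hNc]; omega
        rw [e1, pow_add, pow_add, pow_one]
        ring
      rw [Finset.sum_congr rfl this, ← Finset.mul_sum, weight_sum Nᶜ p q,
        Finset.card_compl]
    · simp [h]
  rw [Finset.sum_congr rfl step, ← Finset.sum_mul]
  congr 1
  rw [Finset.sum_ite, Finset.sum_const_zero, add_zero, Finset.sum_const,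
    ← Finset.powersetCard_eq_filter, Finset.card_powersetCard, Nat.choose_one_right,
    nsmul_eq_mul]


lemma one_sub_inv_pow {M : ℕ} (hM : 2 ≤ M) :
    (1/3 : ℝ) ≤ (1 - 1/(M:ℝ)) ^ (M - 1) := by
  have hM1 : (1:ℝ) ≤ (M:ℝ) - 1 := by
    have : (2:ℝ) ≤ (M:ℝ) := by exact_mod_cast hM
    linarith
  have hMpos : (0:ℝ) < M := by positivity
  set k : ℝ := (M:ℝ) - 1 with hk
  have hkpos : (0:ℝ) < k := by linarith
  have h1 : (1 - 1/(M:ℝ)) = (1 + 1/k)⁻¹ := by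
    have hk0 : k ≠ 0 := ne_of_gt hkpos
    have hM0 : (M:ℝ) ≠ 0 := ne_of_gt hMpos
    have : (1 + 1/k) = (M:ℝ)/k := by field_simp [hk]; linarith
    rw [this, inv_div]
    field_simp [hk]
    linarith
  have h2 : (1 + 1/k) ^ (M - 1) ≤ 3 := by
    have hexp : (1 + 1/k) ≤ Real.exp (1/k) := by
      have := Real.add_one_le_exp (1/k)
      linarith
    have hp : (1 + 1/k) ^ (M - 1) ≤ (Real.exp (1/k)) ^ (M - 1) := by
      apply pow_le_pow_left₀ (by positivity) hexp
    have : (Real.exp (1/k)) ^ (M - 1) = Real.exp ((M-1 : ℕ) * (1/k)) := by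
      rw [← Real.exp_nat_mul]
    rw [this] at hp
    have hcast : ((M - 1 : ℕ) : ℝ) = k := by
      rw [hk]
      push_cast [Nat.cast_sub (by omega : 1 ≤ M)]
      ring
    rw [hcast] at hp
    have : k * (1/k) = 1 := by field_simp
    rw [this] at hp
    have : Real.exp 1 ≤ 3 := le_of_lt (by
      have := Real.exp_one_lt_d9; linarith)
    linarith
  rw [h1, inv_pow]
  have hpos : (0:ℝ) < (1 + 1/k) ^ (M-1) := by positivity
  rw [one_div, inv_le_inv₀ (by norm_num) hpos]
  exact h2

lemma per_vertex {i d : ℕ} (hd1 : 2^i ≤ d) (hd2 : d < 2^(i+1)) :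
    (1/6 : ℝ) ≤ (d:ℝ) * ((1/((2^(i+1) : ℕ) : ℝ)) * (1 - 1/((2^(i+1):ℕ):ℝ)) ^ (d - 1)) := by
  set M : ℕ := 2^(i+1) with hM
  have hM2 : 2 ≤ M := by
    rw [hM]; calc 2 = 2^1 := by norm_num
    _ ≤ 2^(i+1) := Nat.pow_le_pow_right (by norm_num) (by omega)
  have hMpos : (0:ℝ) < (M:ℝ) := by positivity
  set p : ℝ := 1/((M:ℕ):ℝ) with hp
  have hp_pos : 0 < p := by positivity
  have hq0 : (0:ℝ) ≤ 1 - p := by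
    rw [hp]
    have : (1:ℝ) ≤ (M:ℝ) := by exact_mod_cast (by omega : 1 ≤ M)
    have h := div_le_one_of_le₀ (le_refl (1:ℝ)) (by norm_num) |>.trans (le_refl 1)
    have : 1/(M:ℝ) ≤ 1 := by
      rw [div_le_one hMpos]; exact this
    linarith
  have hq1 : 1 - p ≤ 1 := by linarith
  have h1 : (1/2 : ℝ) ≤ (d:ℝ) * p := by
    have hcast : ((2^i : ℕ) : ℝ) ≤ (d:ℝ) := by exact_mod_cast hd1
    have hMval : (M:ℝ) = 2 * ((2^i : ℕ):ℝ) := by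
      rw [hM]; push_cast; ring
    rw [hp, hMval]
    have h2i : (0:ℝ) < ((2^i : ℕ):ℝ) := by positivity
    calc (1/2 : ℝ) = ((2^i:ℕ):ℝ) * (1 / (2 * ((2^i:ℕ):ℝ))) := by field_simp
    _ ≤ (d:ℝ) * (1 / (2 * ((2^i:ℕ):ℝ))) := by
        apply mul_le_mul_of_nonneg_right hcast (by positivity)
  have h2 : (1/3:ℝ) ≤ (1 - p) ^ (d - 1) := by
    calc (1/3:ℝ) ≤ (1 - p) ^ (M - 1) := one_sub_inv_pow hM2
    _ ≤ (1 - p) ^ (d - 1) := pow_le_pow_of_le_one hq0 hq1 (by omega)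
  calc (1/6:ℝ) = (1/2) * (1/3) := by norm_num
  _ ≤ ((d:ℝ) * p) * ((1-p)^(d-1)) := by
      apply mul_le_mul h1 h2 (by norm_num) (by positivity)
  _ = (d:ℝ) * (p * (1-p)^(d-1)) := by ring



/-- In a bipartite graph `G = (A, B, E)` with `|A| ≥ 2` in which every
vertex of `B` has a neighbor in `A`, there are `X ⊆ A` and `B' ⊆ B` with
`|B'| ≥ |B| / (150 · ln |A|)` such that every `b ∈ B'` has exactly one neighbor in `X`. -/
theorem stmt_0 {A B : Type} [Fintype A] [Fintype B]
    (E : A → B → Prop) [∀ a b, Decidable (E a b)]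
    (hA : 2 ≤ Fintype.card A)
    (hnb : ∀ b : B, ∃ a : A, E a b) :
    ∃ (X : Finset A) (B' : Finset B),
      (Fintype.card B : ℝ) / (150 * Real.log (Fintype.card A)) ≤ (B'.card : ℝ) ∧
      ∀ b ∈ B', ∃! a : A, a ∈ X ∧ E a b := by
  classical
  set n := Fintype.card A with hn
  set N : B → Finset A := fun b => Finset.univ.filter (fun a => E a b) with hN
  have hdeg1 : ∀ b, 1 ≤ (N b).card := by
    intro b
    obtain ⟨a, ha⟩ := hnb b
    exact Finset.card_pos.2 ⟨a, by simp [hN, ha]⟩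
  have hdegn : ∀ b, (N b).card ≤ n := fun b => by
    simpa [hn] using Finset.card_le_card (Finset.subset_univ (N b))
  set m : ℕ := Nat.log 2 n + 1 with hm
  set bucket : ℕ → Finset B := fun i => Finset.univ.filter (fun b => Nat.log 2 ((N b).card) = i)
    with hbucket
  -- pigeonhole
  have hsum : ∑ i ∈ Finset.range m, (bucket i).card = Fintype.card B := by
    rw [← Finset.card_univ]
    exact (Finset.card_eq_sum_card_fiberwise (fun b _ => by
      simp only [Finset.coe_range, Set.mem_Iio, Finset.mem_coe, Finset.mem_range, hm]
      have := Nat.log_mono_right (hdegn b) (b := 2)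
      omega)).symm
  have hpig : ∃ i, i < m ∧ (Fintype.card B : ℝ) / m ≤ ((bucket i).card : ℝ) := by
    by_contra hc
    push_neg at hc
    have hlt : ∑ i ∈ Finset.range m, ((bucket i).card : ℝ)
        < ∑ i ∈ Finset.range m, (Fintype.card B : ℝ) / m := by
      apply Finset.sum_lt_sum_of_nonempty ⟨0, Finset.mem_range.2 (by omega)⟩
      intro i hi
      exact hc i (Finset.mem_range.1 hi)
    rw [Finset.sum_const, Finset.card_range, nsmul_eq_mul,
      mul_div_cancel₀ _ (by positivity : ((m:ℝ)) ≠ 0)] at hlt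
    rw [← Nat.cast_sum] at hlt
    rw [hsum] at hlt
    exact lt_irrefl _ hlt
  obtain ⟨i, him, hbig⟩ := hpig
  -- probabilistic selection
  set p : ℝ := 1 / ((2^(i+1) : ℕ) : ℝ) with hp
  set q : ℝ := 1 - p with hq
  have hMpos : (0:ℝ) < ((2^(i+1):ℕ):ℝ) := by positivity
  have hM2 : (2:ℝ) ≤ ((2^(i+1):ℕ):ℝ) := by
    have : (2:ℕ) ≤ 2^(i+1) := by
      calc (2:ℕ) = 2^1 := rfl
      _ ≤ 2^(i+1) := Nat.pow_le_pow_right (by norm_num) (by omega)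
    exact_mod_cast this
  have hppos : 0 < p := by rw [hp]; positivity
  have hqpos : 0 < q := by
    rw [hq, hp]
    have : 1/((2^(i+1):ℕ):ℝ) ≤ 1/2 := by
      apply div_le_div_of_nonneg_left (by norm_num) (by norm_num) hM2
    linarith
  have hpq : p + q = 1 := by rw [hq]; ring
  -- degrees in bucket i
  have hdb : ∀ b ∈ bucket i, 2^i ≤ (N b).card ∧ (N b).card < 2^(i+1) := by
    intro b hb
    simp only [hbucket, Finset.mem_filter] at hb
    constructor
    · rw [← hb.2]
      exact Nat.pow_log_le_self 2 (by have := hdeg1 b; omega)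
    · rw [← hb.2]
      exact Nat.lt_pow_succ_log_self (by norm_num) _
  -- expectation computation
  set w : Finset A → ℝ := fun X => p ^ X.card * q ^ (n - X.card) with hw
  have hwpos : ∀ X : Finset A, 0 < w X := fun X => by
    rw [hw]; positivity
  set cnt : Finset A → ℕ := fun X => ((bucket i).filter (fun b => (X ∩ N b).card = 1)).card
    with hcnt
  have hswap : ∑ X ∈ (Finset.univ : Finset A).powerset, w X * (cnt X : ℝ)
      = ∑ b ∈ bucket i, ∑ X ∈ (Finset.univ : Finset A).powerset,
          (if (X ∩ N b).card = 1 then w X else 0) := by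
    rw [Finset.sum_comm]
    refine Finset.sum_congr rfl fun X _ => ?_
    rw [hcnt]
    simp only [Finset.card_filter]
    push_cast
    rw [Finset.mul_sum]
    refine Finset.sum_congr rfl fun b _ => ?_
    by_cases h : (X ∩ N b).card = 1 <;> simp [h]
  have hlower : ((bucket i).card : ℝ) * (1/6)
      ≤ ∑ X ∈ (Finset.univ : Finset A).powerset, w X * (cnt X : ℝ) := by
    rw [hswap]
    calc ((bucket i).card : ℝ) * (1/6) = ∑ _b ∈ bucket i, (1/6 : ℝ) := by
          rw [Finset.sum_const, nsmul_eq_mul]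
    _ ≤ _ := by
        apply Finset.sum_le_sum
        intro b hb
        have hiso := iso_sum (N b) p q
        rw [hpq, one_pow, mul_one] at hiso
        simp only [hw]
        rw [← hn] at hiso
        rw [hiso]
        obtain ⟨h1, h2⟩ := hdb b hb
        have := per_vertex h1 h2
        rw [← hp] at this
        have hqq : (1 - 1/((2^(i+1):ℕ):ℝ)) = q := by rw [hq, hp]
        rw [hqq] at this
        exact this
  have hweight : ∑ X ∈ (Finset.univ : Finset A).powerset, w X = 1 := by
    simp only [hw]
    have := weight_sum (Finset.univ : Finset A) p q
    rw [Finset.card_univ, ← hn, hpq, one_pow] at this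
    exact this
  have hex : ∃ X : Finset A, ((bucket i).card : ℝ) * (1/6) ≤ (cnt X : ℝ) := by
    by_contra hc
    push_neg at hc
    have : ∑ X ∈ (Finset.univ : Finset A).powerset, w X * (cnt X : ℝ)
        < ∑ X ∈ (Finset.univ : Finset A).powerset, w X * (((bucket i).card : ℝ) * (1/6)) := by
      apply Finset.sum_lt_sum_of_nonempty
      · exact ⟨∅, Finset.mem_powerset.2 (Finset.empty_subset _)⟩
      · intro X _
        exact mul_lt_mul_of_pos_left (hc X) (hwpos X)
    rw [← Finset.sum_mul, hweight, one_mul] at this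
    linarith
  obtain ⟨X, hX⟩ := hex
  refine ⟨X, (bucket i).filter (fun b => (X ∩ N b).card = 1), ?_, ?_⟩
  · -- cardinality bound
    have hlogpos : 0 < Real.log n := Real.log_pos (by exact_mod_cast (by omega : 1 < n))
    have hL : ((Nat.log 2 n : ℕ) : ℝ) * Real.log 2 ≤ Real.log n := by
      rw [← Real.log_pow]
      apply Real.log_le_log (by positivity)
      exact_mod_cast Nat.pow_log_le_self 2 (by omega)
    have hl2 : Real.log 2 ≤ Real.log n := by
      apply Real.log_le_log (by norm_num)
      exact_mod_cast (by omega : 2 ≤ n)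
    have hlog2 : (0.6931471803 : ℝ) < Real.log 2 := Real.log_two_gt_d9
    have hmle : (m : ℝ) * 0.6931471803 ≤ 2 * Real.log n := by
      have hL0 : (0:ℝ) ≤ ((Nat.log 2 n : ℕ) : ℝ) := Nat.cast_nonneg _
      have : (m:ℝ) = ((Nat.log 2 n : ℕ):ℝ) + 1 := by rw [hm]; push_cast; ring
      nlinarith
    have h6m : (0:ℝ) < 6 * m := by positivity
    have hkey : 6 * (m:ℝ) ≤ 150 * Real.log n := by nlinarith
    have hc1 : (Fintype.card B : ℝ) / (150 * Real.log n) ≤ (Fintype.card B : ℝ) / (6 * m) := by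
      apply div_le_div_of_nonneg_left (Nat.cast_nonneg _) h6m hkey
    have hc2 : (Fintype.card B : ℝ) / (6 * m) ≤ (cnt X : ℝ) := by
      calc (Fintype.card B : ℝ) / (6 * m) = ((Fintype.card B : ℝ) / m) * (1/6) := by
            ring
      _ ≤ ((bucket i).card : ℝ) * (1/6) := by
            apply mul_le_mul_of_nonneg_right hbig (by norm_num)
      _ ≤ (cnt X : ℝ) := hX
    exact le_trans (by rw [hn]; exact hc1) hc2
  · -- uniqueness property
    intro b hb
    rw [Finset.mem_filter] at hb
    obtain ⟨a₀, ha₀⟩ := Finset.card_eq_one.1 hb.2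
    have ha₀m : a₀ ∈ X ∩ N b := by rw [ha₀]; exact Finset.mem_singleton_self a₀
    rw [Finset.mem_inter] at ha₀m
    refine ⟨a₀, ⟨ha₀m.1, by simpa [hN] using ha₀m.2⟩, ?_⟩
    intro a ha
    have : a ∈ X ∩ N b := Finset.mem_inter.2 ⟨ha.1, by simp [hN, ha.2]⟩
    rw [ha₀] at this
    exact Finset.mem_singleton.1 this
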